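/- If u : ℝ → ℝ is bounded, differentiable, increasing, with limits u(−∞)=0 and u(+∞)=1, the kernel J is nonnegative, even, integrable with ∫ J = 1, and (c,U) solves cU' + J*U − U − f(U) = 0 on ℝ with U' integrable and (U')² integrable, then c ∫_ℝ (U'(ξ))² dξ = ∫₀¹ f(s) ds. -/

import Mathlib

open MeasureTheory Filter Set Topology intervalIntegral

private lemma intA1 (φ U : ℝ → ℝ) (hφ : Continuous φ) (hU : ContDiff ℝ 1 U)
    (hUrange : ∀ ξ, U ξ ∈ Set.Icc (0:ℝ) 1)
    (hlim0 : Tendsto U atBot (nhds 0)) (hlim1 : Tendsto U atTop (nhds 1))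
    (hL1 : Integrable (deriv U)) :
    ∫ ξ, φ (U ξ) * deriv U ξ = ∫ s in (0:ℝ)..1, φ s := by
  set F : ℝ → ℝ := fun u => ∫ t in (0:ℝ)..u, φ t with hF
  have hFd : ∀ s, HasDerivAt F (φ s) s := fun s =>
    intervalIntegral.integral_hasDerivAt_right (hφ.intervalIntegrable 0 s)
      hφ.aestronglyMeasurable.stronglyMeasurableAtFilter hφ.continuousAt
  have hUd : ∀ ξ, HasDerivAt U (deriv U ξ) ξ := fun ξ =>
    ((hU.differentiable one_ne_zero) ξ).hasDerivAt
  have hcomp : ∀ ξ, HasDerivAt (fun ξ => F (U ξ)) (φ (U ξ) * deriv U ξ) ξ := fun ξ =>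
    (hFd (U ξ)).comp ξ (hUd ξ)
  have hFc : Continuous F := continuous_iff_continuousAt.mpr fun s => (hFd s).continuousAt
  obtain ⟨M, hM⟩ : ∃ M, ∀ x ∈ Set.Icc (0:ℝ) 1, ‖φ x‖ ≤ M :=
    (isCompact_Icc.exists_bound_of_continuousOn hφ.continuousOn)
  have hInt : Integrable (fun ξ => φ (U ξ) * deriv U ξ) := by
    refine Integrable.mono' (hL1.norm.const_mul M)
      ((hφ.comp hU.continuous).mul (hU.continuous_deriv le_rfl)).aestronglyMeasurable
      (Eventually.of_forall fun ξ => ?_)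
    rw [norm_mul]
    exact mul_le_mul_of_nonneg_right (hM _ (hUrange ξ)) (norm_nonneg _)
  have h0 : Tendsto (fun ξ => F (U ξ)) atBot (nhds (F 0)) :=
    (hFc.continuousAt.tendsto).comp hlim0
  have h1 : Tendsto (fun ξ => F (U ξ)) atTop (nhds (F 1)) :=
    (hFc.continuousAt.tendsto).comp hlim1
  have := MeasureTheory.integral_of_hasDerivAt_of_tendsto hcomp hInt h0 h1
  simpa [hF, intervalIntegral.integral_same] using this

private lemma intA2 (U : ℝ → ℝ) (hU : ContDiff ℝ 1 U)
    (hUrange : ∀ ξ, U ξ ∈ Set.Icc (0:ℝ) 1)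
    (hlim0 : Tendsto U atBot (nhds 0)) (hlim1 : Tendsto U atTop (nhds 1))
    (hL1 : Integrable (deriv U)) (w : ℝ) :
    (∫ ξ, U (ξ - w) * deriv U ξ) + (∫ ξ, U (ξ + w) * deriv U ξ) = 1 := by
  have hUd : ∀ ξ, HasDerivAt U (deriv U ξ) ξ := fun ξ =>
    ((hU.differentiable one_ne_zero) ξ).hasDerivAt
  have hUc : Continuous U := hU.continuous
  have hVc : Continuous (deriv U) := hU.continuous_deriv le_rfl
  have hU01 : ∀ x, ‖U x‖ ≤ 1 := fun x => by
    rw [Real.norm_eq_abs, abs_le]; exact ⟨by linarith [(hUrange x).1], (hUrange x).2⟩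
  have hshift : ∀ ξ, HasDerivAt (fun ξ => U (ξ + w)) (deriv U (ξ + w)) ξ := fun ξ => by
    simpa [Function.comp_def] using (hUd (ξ + w)).comp ξ ((hasDerivAt_id ξ).add_const w)
  have hP : ∀ ξ, HasDerivAt (fun ξ => U ξ * U (ξ + w))
      (deriv U ξ * U (ξ + w) + U ξ * deriv U (ξ + w)) ξ := fun ξ =>
    (hUd ξ).mul (hshift ξ)
  have i1 : Integrable (fun ξ => deriv U ξ * U (ξ + w)) := by
    refine Integrable.mono' hL1.norm
      (hVc.mul (hUc.comp (continuous_id.add continuous_const))).aestronglyMeasurable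
      (Eventually.of_forall fun ξ => ?_)
    rw [norm_mul]
    simpa using mul_le_mul_of_nonneg_left (hU01 (ξ + w)) (norm_nonneg (deriv U ξ))
  have i2 : Integrable (fun ξ => U ξ * deriv U (ξ + w)) := by
    refine Integrable.mono' (hL1.comp_add_right w).norm
      (hUc.mul (hVc.comp (continuous_id.add continuous_const))).aestronglyMeasurable
      (Eventually.of_forall fun ξ => ?_)
    rw [norm_mul]
    simpa using mul_le_mul_of_nonneg_right (hU01 ξ) (norm_nonneg (deriv U (ξ + w)))
  have hmapbot : Tendsto (fun ξ : ℝ => ξ + w) atBot atBot :=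
    tendsto_atBot_add_const_right atBot w tendsto_id
  have hmaptop : Tendsto (fun ξ : ℝ => ξ + w) atTop atTop :=
    tendsto_atTop_add_const_right atTop w tendsto_id
  have h0 : Tendsto (fun ξ => U ξ * U (ξ + w)) atBot (nhds 0) := by
    simpa using hlim0.mul (hlim0.comp hmapbot)
  have h1 : Tendsto (fun ξ => U ξ * U (ξ + w)) atTop (nhds 1) := by
    simpa using hlim1.mul (hlim1.comp hmaptop)
  have key := MeasureTheory.integral_of_hasDerivAt_of_tendsto hP (i1.add i2) h0 h1
  rw [integral_add i1 i2] at key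
  have e1 : (∫ ξ, deriv U ξ * U (ξ + w)) = ∫ ξ, U (ξ + w) * deriv U ξ := by
    simp_rw [mul_comm]
  have e2 : (∫ ξ, U ξ * deriv U (ξ + w)) = ∫ ξ, U (ξ - w) * deriv U ξ := by
    have := integral_add_right_eq_self (μ := volume) (fun ξ => U (ξ - w) * deriv U ξ) w
    simpa using this
  rw [e1, e2] at key
  linarith

private lemma intB (J U : ℝ → ℝ)
    (hJpos : ∀ x, 0 ≤ J x) (hJeven : ∀ x, J x = J (-x))
    (hJint : Integrable J) (hJone : ∫ x, J x = 1)
    (hU : ContDiff ℝ 1 U)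
    (hUrange : ∀ ξ, U ξ ∈ Set.Icc (0:ℝ) 1)
    (hU' : ∀ ξ, 0 < deriv U ξ)
    (hlim0 : Tendsto U atBot (nhds 0)) (hlim1 : Tendsto U atTop (nhds 1))
    (hL1 : Integrable (deriv U)) :
    ∫ ξ, (∫ y, J (ξ - y) * U y) * deriv U ξ = 1/2 := by
  set V := deriv U with hV
  have hUc : Continuous U := hU.continuous
  have hVc : Continuous V := hU.continuous_deriv le_rfl
  set K : ℝ → ℝ := fun z => ∫ ξ, U (ξ - z) * V ξ with hK
  have hprod : Integrable (fun p : ℝ × ℝ => J p.2 * (U (p.1 - p.2) * V p.1))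
      ((volume : Measure ℝ).prod volume) := by
    have hbound : Integrable (fun p : ℝ × ℝ => V p.1 * J p.2)
        ((volume : Measure ℝ).prod volume) := hL1.mul_prod hJint
    have hmeas : AEStronglyMeasurable (fun p : ℝ × ℝ => J p.2 * (U (p.1 - p.2) * V p.1))
        ((volume : Measure ℝ).prod volume) :=
      hJint.1.comp_snd.mul
        ((hUc.comp (continuous_fst.sub continuous_snd)).mul (hVc.comp continuous_fst)).aestronglyMeasurable
    refine Integrable.mono' hbound hmeas (Eventually.of_forall fun p => ?_)
    have h1 : 0 ≤ U (p.1 - p.2) := (hUrange _).1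
    have h2 : U (p.1 - p.2) ≤ 1 := (hUrange _).2
    have h3 : 0 < V p.1 := hU' _
    rw [Real.norm_eq_abs, abs_of_nonneg (mul_nonneg (hJpos _) (mul_nonneg h1 h3.le))]
    calc J p.2 * (U (p.1 - p.2) * V p.1) ≤ J p.2 * (1 * V p.1) := by
          apply mul_le_mul_of_nonneg_left _ (hJpos _)
          exact mul_le_mul_of_nonneg_right h2 h3.le
      _ = V p.1 * J p.2 := by ring
  have step1 : ∀ ξ, (∫ y, J (ξ - y) * U y) * V ξ = ∫ z, J z * (U (ξ - z) * V ξ) := by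
    intro ξ
    have h := integral_sub_left_eq_self (fun z => J z * U (ξ - z)) (volume : Measure ℝ) ξ
    simp only [sub_sub_cancel] at h
    rw [h, ← MeasureTheory.integral_mul_const]
    congr 1; ext y; ring
  have step2 : (∫ ξ, (∫ y, J (ξ - y) * U y) * V ξ)
      = ∫ z, J z * K z := by
    simp_rw [step1]
    rw [integral_integral_swap (by exact hprod)]
    simp_rw [MeasureTheory.integral_const_mul]
    rfl
  have h1int : Integrable (fun z => J z * K z) := by
    have h := (hprod.swap).integral_prod_left
    simp only [Function.comp_def, Prod.swap_prod_mk, MeasureTheory.integral_const_mul] at h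
    exact h
  have h2int : Integrable (fun z => J z * K (-z)) := by
    have := h1int.comp_neg
    simp only [← hJeven] at this
    exact this
  have hsym : (∫ z, J z * K z) = ∫ z, J z * K (-z) := by
    have h := integral_neg_eq_self (fun z => J z * K z) (volume : Measure ℝ)
    calc (∫ z, J z * K z) = ∫ z, J (-z) * K (-z) := h.symm
      _ = ∫ z, J z * K (-z) := by simp_rw [← hJeven]
  have hKone : ∀ z, K z + K (-z) = 1 := by
    intro z
    have h := intA2 U hU hUrange hlim0 hlim1 hL1 z
    have hKneg : K (-z) = ∫ ξ, U (ξ + z) * V ξ := by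
      simp only [hK, sub_neg_eq_add]
    calc K z + K (-z) = (∫ ξ, U (ξ - z) * V ξ) + ∫ ξ, U (ξ + z) * V ξ := by rw [hKneg]
      _ = 1 := h
  have hdouble : (∫ z, J z * K z) + (∫ z, J z * K (-z)) = 1 := by
    rw [← integral_add h1int h2int]
    have : ∀ z, J z * K z + J z * K (-z) = J z := by
      intro z; rw [← mul_add, hKone z, mul_one]
    simp_rw [this]
    exact hJone
  rw [step2]
  linarith [hsym, hdouble]

/-- the traveling-front speed identity
`c ∫ (U')² dξ = ∫₀¹ f(s) ds`. -/
theorem traveling_front_speed_identity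
    (J f U : ℝ → ℝ) (c : ℝ)
    (hJpos : ∀ x, 0 ≤ J x)
    (hJeven : ∀ x, J x = J (-x))
    (hJint : Integrable J)
    (hJone : ∫ x, J x = 1)
    (hf : ContDiff ℝ 2 f)
    (hUrange : ∀ ξ, U ξ ∈ Set.Icc (0 : ℝ) 1)
    (hU : ContDiff ℝ 1 U)
    (hU' : ∀ ξ, 0 < deriv U ξ)
    (hlim0 : Tendsto U atBot (nhds 0))
    (hlim1 : Tendsto U atTop (nhds 1))
    (heq : ∀ ξ, c * deriv U ξ + (∫ y : ℝ, J (ξ - y) * U y) - U ξ - f (U ξ) = 0)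
    (hL1 : Integrable (deriv U))
    (hL2 : Integrable (fun ξ => (deriv U ξ) ^ 2)) :
    c * ∫ ξ : ℝ, (deriv U ξ) ^ 2 = ∫ s in (0 : ℝ)..1, f s := by
  have hUc : Continuous U := hU.continuous
  have hVc : Continuous (deriv U) := hU.continuous_deriv le_rfl
  have hB := intB J U hJpos hJeven hJint hJone hU hUrange hU' hlim0 hlim1 hL1
  have hg : ∀ ξ, (∫ y : ℝ, J (ξ - y) * U y) = U ξ + f (U ξ) - c * deriv U ξ := by
    intro ξ; have := heq ξ; linarith
  have ia : Integrable (fun ξ => U ξ * deriv U ξ) := by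
    refine Integrable.mono' hL1.norm (hUc.mul hVc).aestronglyMeasurable
      (Eventually.of_forall fun ξ => ?_)
    rw [norm_mul]
    have : ‖U ξ‖ ≤ 1 := by
      rw [Real.norm_eq_abs, abs_le]; exact ⟨by linarith [(hUrange ξ).1], (hUrange ξ).2⟩
    simpa using mul_le_mul_of_nonneg_right this (norm_nonneg (deriv U ξ))
  have ib : Integrable (fun ξ => f (U ξ) * deriv U ξ) := by
    obtain ⟨M, hM⟩ : ∃ M, ∀ x ∈ Set.Icc (0:ℝ) 1, ‖f x‖ ≤ M :=
      (isCompact_Icc.exists_bound_of_continuousOn hf.continuous.continuousOn)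
    refine Integrable.mono' (hL1.norm.const_mul M)
      ((hf.continuous.comp hUc).mul hVc).aestronglyMeasurable
      (Eventually.of_forall fun ξ => ?_)
    rw [norm_mul]
    exact mul_le_mul_of_nonneg_right (hM _ (hUrange ξ)) (norm_nonneg _)
  have ic : Integrable (fun ξ => c * (deriv U ξ)^2) := hL2.const_mul c
  have hsplit : (∫ ξ, (∫ y : ℝ, J (ξ - y) * U y) * deriv U ξ)
      = (∫ ξ, U ξ * deriv U ξ) + (∫ ξ, f (U ξ) * deriv U ξ) - ∫ ξ, c * (deriv U ξ)^2 := by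
    have : ∀ ξ, (∫ y : ℝ, J (ξ - y) * U y) * deriv U ξ
        = U ξ * deriv U ξ + f (U ξ) * deriv U ξ - c * (deriv U ξ)^2 := by
      intro ξ; rw [hg ξ]; ring
    simp_rw [this]
    exact (integral_sub (ia.add ib) ic).trans (by simp only [Pi.add_apply]; rw [integral_add ia ib])
  have hUV : (∫ ξ, U ξ * deriv U ξ) = 1/2 := by
    have := intA1 (fun s => s) U continuous_id hU hUrange hlim0 hlim1 hL1
    simpa using this
  have hfUV : (∫ ξ, f (U ξ) * deriv U ξ) = ∫ s in (0:ℝ)..1, f s :=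
    intA1 f U hf.continuous hU hUrange hlim0 hlim1 hL1
  have hc : (∫ ξ, c * (deriv U ξ)^2) = c * ∫ ξ : ℝ, (deriv U ξ)^2 := MeasureTheory.integral_const_mul c _
  rw [hB, hUV, hfUV, hc] at hsplit
  linarith
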